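/- arXiv:math/0505422 — 2 statements merged into one kernel-verified Lean document; each statement's English description precedes it below -/
import Mathlib

section
/- For a fixed integer a and fixed integer k ≥ 1, the limit as N → ∞ (over odd N) of N^(-k) times the sum over N-th roots of unity ζ ≠ 1 of ζ^((N-1)/2 + a) / (1-ζ)^k equals (1 - 2^(-k+1)) · B_k / k!, where B_k is the k-th Bernoulli number defined by -u/sinh(u) = Σ_k ((2^k - 2)/k!) B_k u^k. -/
open Nat Complex Filter Finset Topology

/-- The `p`-th `N`-th root of unity. -/
noncomputable def rou (N p : ℕ) : ℂ := Complex.exp (2 * Real.pi * Complex.I * p / N)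

namespace Stmt2Aux

/-- Root of unity with integer index. -/
noncomputable def zrou (N : ℕ) (j : ℤ) : ℂ := Complex.exp (2 * Real.pi * Complex.I * j / N)

lemma zrou_ne_zero (N : ℕ) (j : ℤ) : zrou N j ≠ 0 := Complex.exp_ne_zero _

lemma zrou_natCast (N p : ℕ) : zrou N (p : ℤ) = rou N p := by
  simp [zrou, rou]

lemma zrou_sub_N {N : ℕ} (hN : N ≠ 0) (j : ℤ) : zrou N (j - N) = zrou N j := by
  have hNC : (N : ℂ) ≠ 0 := Nat.cast_ne_zero.mpr hN
  have h : 2 * (Real.pi : ℂ) * Complex.I * ((j : ℂ) - N) / N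
      = 2 * Real.pi * Complex.I * j / N - 2 * Real.pi * Complex.I := by
    field_simp
  rw [zrou, zrou]
  push_cast
  rw [h, Complex.exp_sub, Complex.exp_two_pi_mul_I, div_one]

lemma zrou_eq_exp_mul_I (N : ℕ) (j : ℤ) :
    zrou N j = Complex.exp ((2 * Real.pi * j / N : ℝ) * Complex.I) := by
  unfold zrou
  congr 1
  push_cast
  ring

lemma abs_zrou (N : ℕ) (j : ℤ) : ‖zrou N j‖ = 1 := by
  rw [zrou_eq_exp_mul_I, Complex.norm_exp_ofReal_mul_I]

lemma zrou_zpow (N : ℕ) (j s : ℤ) : zrou N j ^ s = zrou N (s * j) := by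
  rw [zrou, ← Complex.exp_int_mul, zrou]
  congr 1
  push_cast
  ring

lemma zrou_pow (N : ℕ) (j : ℤ) (p : ℕ) : zrou N j ^ p = zrou N (p * j) := by
  rw [← zpow_natCast, zrou_zpow]

lemma zrou_eq_one_iff {N : ℕ} (hN : N ≠ 0) (s : ℤ) : zrou N s = 1 ↔ (N : ℤ) ∣ s := by
  rw [zrou, Complex.exp_eq_one_iff]
  constructor
  · rintro ⟨n, hn⟩
    have hNC : (N : ℂ) ≠ 0 := Nat.cast_ne_zero.mpr hN
    have hπ : (Real.pi : ℂ) ≠ 0 := Complex.ofReal_ne_zero.mpr Real.pi_ne_zero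
    have h2 : (2 : ℂ) * Real.pi * Complex.I ≠ 0 := by
      simp [hπ, Complex.I_ne_zero]
    have h3 : 2 * (Real.pi : ℂ) * Complex.I * s = 2 * Real.pi * Complex.I * (N * n) := by
      field_simp at hn
      linear_combination (2 * (Real.pi : ℂ) * Complex.I) * hn
    have h : (s : ℂ) = (N : ℂ) * n := mul_left_cancel₀ h2 h3
    exact ⟨n, by exact_mod_cast h⟩
  · rintro ⟨c, rfl⟩
    refine ⟨c, ?_⟩
    have hNC : (N : ℂ) ≠ 0 := Nat.cast_ne_zero.mpr hN
    push_cast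
    field_simp

/-- The summand, reindexed over `ℤ`. -/
noncomputable def fI (k : ℕ) (a : ℤ) (N : ℕ) (j : ℤ) : ℂ :=
  if j ≠ 0 ∧ 2 * j.natAbs < N then
    zrou N j ^ ((((N - 1) / 2 : ℕ) : ℤ) + a) / ((N : ℂ) * (1 - zrou N j)) ^ k
  else 0

/-- The limit function. -/
noncomputable def gI (k : ℕ) (j : ℤ) : ℂ :=
  if j = 0 then 0 else (-1 : ℂ) ^ j / (-(2 * (Real.pi : ℂ) * Complex.I * j)) ^ k

lemma abs_one_sub_exp (θ : ℝ) :
    ‖1 - Complex.exp ((θ : ℝ) * Complex.I)‖ = 2 * |Real.sin (θ / 2)| := by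
  have hu : Complex.exp ((θ/2 : ℝ) * I) * Complex.exp (-(θ/2 : ℝ) * I) = 1 := by
    rw [← Complex.exp_add]
    norm_num
  have hu2 : Complex.exp ((θ/2 : ℝ) * I) * Complex.exp ((θ/2 : ℝ) * I)
      = Complex.exp ((θ : ℝ) * I) := by
    rw [← Complex.exp_add]
    congr 1
    push_cast
    ring
  have key : 1 - Complex.exp ((θ : ℝ) * I)
      = -(Complex.exp ((θ/2 : ℝ) * I) * (2 * I * Complex.sin ((θ/2 : ℝ) : ℂ))) := by
    rw [Complex.sin]
    linear_combination (-1 : ℂ) * hu + hu2 +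
      (Complex.exp ((θ/2 : ℝ) * I) * (Complex.exp (-(θ/2 : ℝ) * I)
        - Complex.exp ((θ/2 : ℝ) * I))) * Complex.I_sq
  rw [key, norm_neg, norm_mul, Complex.norm_exp_ofReal_mul_I, one_mul,
    ← Complex.ofReal_sin, norm_mul, norm_mul, Complex.norm_two, Complex.norm_I,
    Complex.norm_real, Real.norm_eq_abs, mul_one]

lemma bound_fI {k : ℕ} (hk : 1 ≤ k) (a : ℤ) (N : ℕ) (j : ℤ) :
    ‖fI k a N j‖ ≤ 1 / (4 * |(j : ℝ)|) ^ k := by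
  have hRHS : 0 ≤ 1 / (4 * |(j : ℝ)|) ^ k := by positivity
  rw [fI]
  split_ifs with h
  swap
  · simpa using hRHS
  obtain ⟨hj0, hjN⟩ := h
  have hN : 0 < N := lt_of_le_of_lt (Nat.zero_le _) hjN
  have hNR : (0 : ℝ) < N := by exact_mod_cast hN
  have hjR : 0 < |(j : ℝ)| := by simp [abs_pos, hj0]
  have hjabs : (j.natAbs : ℝ) = |(j : ℝ)| := by
    rw [Nat.cast_natAbs]; push_cast; ring
  have hjN' : 2 * |(j : ℝ)| ≤ (N : ℝ) := by
    rw [← hjabs]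
    exact_mod_cast hjN.le
  set x : ℝ := Real.pi * |(j : ℝ)| / N with hx
  have hx1 : 0 ≤ x := by positivity
  have hx2 : x ≤ Real.pi / 2 := by
    rw [hx, div_le_div_iff₀ hNR two_pos]
    nlinarith [Real.pi_pos]
  have hsin : 2 / Real.pi * x ≤ Real.sin x := Real.mul_le_sin hx1 hx2
  have hsin0 : 0 ≤ Real.sin x := le_trans (by positivity) hsin
  -- |sin (π j / N)| = sin x
  have habs_sin : |Real.sin (Real.pi * (j : ℝ) / N)| = Real.sin x := by
    rcases abs_cases ((j : ℝ)) with ⟨hc, _⟩ | ⟨hc, _⟩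
    · rw [hx, hc]
      exact _root_.abs_of_nonneg (by rw [hx, hc] at hsin0; exact hsin0)
    · rw [hx, hc]
      have h5 : Real.pi * (j : ℝ) / N = -(Real.pi * -(j : ℝ) / N) := by ring
      rw [h5, Real.sin_neg, abs_neg]
      exact _root_.abs_of_nonneg (by rw [hx, hc] at hsin0; exact hsin0)
  -- norm of denominator base
  have hden : ‖(N : ℂ) * (1 - zrou N j)‖ = 2 * (N : ℝ) * Real.sin x := by
    rw [norm_mul, Complex.norm_natCast, zrou_eq_exp_mul_I,
      abs_one_sub_exp]
    rw [show 2 * Real.pi * (j : ℝ) / N / 2 = Real.pi * (j : ℝ) / N by ring, habs_sin]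
    ring
  have hchain : 4 * |(j : ℝ)| ≤ ‖(N : ℂ) * (1 - zrou N j)‖ := by
    rw [hden]
    have h4 : 4 * |(j : ℝ)| = 2 * (N : ℝ) * (2 / Real.pi * x) := by
      rw [hx]
      field_simp
      ring
    rw [h4]
    have : 0 ≤ 2 * (N : ℝ) := by positivity
    nlinarith
  have hnum : ‖zrou N j ^ ((((N - 1) / 2 : ℕ) : ℤ) + a)‖ = 1 := by
    rw [norm_zpow, abs_zrou, one_zpow]
  rw [norm_div, hnum, norm_pow]
  apply one_div_le_one_div_of_le (by positivity)
  exact pow_le_pow_left₀ (by positivity) hchain k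

lemma sum_eq {k : ℕ} (a : ℤ) {N : ℕ} (hN : Odd N) :
    (1 / (N : ℂ) ^ k) *
        ∑ p ∈ Finset.Ico 1 N,
          rou N p ^ ((((N - 1) / 2 : ℕ) : ℤ) + a) / (1 - rou N p) ^ k
      = ∑' j : ℤ, fI k a N j := by
  classical
  obtain ⟨t, ht⟩ := hN
  have hN0 : N ≠ 0 := by omega
  set s : Finset ℤ := (Finset.Ioo (-(N : ℤ)) N).filter
    (fun j => j ≠ 0 ∧ 2 * j.natAbs < N) with hs
  have hsupp : ∀ j : ℤ, j ∉ s → fI k a N j = 0 := by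
    intro j hj
    rw [fI, if_neg]
    rintro ⟨h1, h2⟩
    exact hj (by rw [hs]; simp only [Finset.mem_filter, Finset.mem_Ioo]; omega)
  rw [tsum_eq_sum hsupp, Finset.mul_sum]
  refine Finset.sum_nbij' (fun p => if 2 * p < N then (p : ℤ) else (p : ℤ) - N)
    (fun j => if 0 ≤ j then j.toNat else (j + N).toNat) ?_ ?_ ?_ ?_ ?_
  · intro p hp
    simp only [Finset.mem_Ico] at hp
    rw [hs]
    simp only [Finset.mem_filter, Finset.mem_Ioo]
    split_ifs with h2 <;> omega
  · intro j hj
    rw [hs] at hj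
    simp only [Finset.mem_filter, Finset.mem_Ioo] at hj
    simp only [Finset.mem_Ico]
    split_ifs with h2 <;> omega
  · intro p hp
    simp only [Finset.mem_Ico] at hp
    split_ifs <;> omega
  · intro j hj
    rw [hs] at hj
    simp only [Finset.mem_filter, Finset.mem_Ioo] at hj
    split_ifs <;> omega
  · intro p hp
    simp only [Finset.mem_Ico] at hp
    have hterm : ∀ z : ℂ,
        1 / (N : ℂ) ^ k * (z ^ ((((N - 1) / 2 : ℕ) : ℤ) + a) / (1 - z) ^ k)
          = z ^ ((((N - 1) / 2 : ℕ) : ℤ) + a) / ((N : ℂ) * (1 - z)) ^ k := by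
      intro z
      rw [mul_pow, _root_.div_mul_div_comm, one_mul]
    split_ifs with h2
    · rw [fI, if_pos (by omega), zrou_natCast, hterm]
    · rw [fI, if_pos (by omega), show ((p : ℤ) - (N : ℕ)) = (p : ℤ) - N from rfl,
        zrou_sub_N hN0, zrou_natCast, hterm]

lemma tendsto_one_div_nat : Tendsto (fun N : ℕ => 1 / (N : ℂ)) atTop (𝓝 0) := by
  have h := tendsto_one_div_atTop_nhds_zero_nat (𝕜 := ℝ)
  have h2 : Tendsto (fun n : ℕ => ((1 / n : ℝ) : ℂ)) atTop (𝓝 ((0 : ℝ) : ℂ)) :=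
    (Complex.continuous_ofReal.tendsto _).comp h
  simpa using h2.congr (fun n => by push_cast; ring)

lemma tendsto_N_mul_one_sub_exp (c : ℂ) :
    Tendsto (fun N : ℕ => (N : ℂ) * (1 - Complex.exp (c / N))) atTop (𝓝 (-c)) := by
  have hd : HasDerivAt (fun z : ℂ => Complex.exp (c * z)) c 0 := by
    have h1 : HasDerivAt (fun z : ℂ => c * z) c 0 := by
      simpa using (hasDerivAt_id (0 : ℂ)).const_mul c
    simpa [Function.comp_def] using (Complex.hasDerivAt_exp (c * 0)).comp 0 h1
  rw [hasDerivAt_iff_tendsto_slope] at hd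
  have h1N : Tendsto (fun N : ℕ => 1 / (N : ℂ)) atTop (𝓝[≠] 0) := by
    rw [tendsto_nhdsWithin_iff]
    refine ⟨tendsto_one_div_nat, ?_⟩
    filter_upwards [eventually_ge_atTop 1] with N hN
    simp only [Set.mem_compl_iff, Set.mem_singleton_iff]
    exact one_div_ne_zero (Nat.cast_ne_zero.mpr (by omega))
  have hcomp := hd.comp h1N
  have hev : (fun N : ℕ => (N : ℂ) * (Complex.exp (c / N) - 1))
      =ᶠ[atTop] (slope (fun z : ℂ => Complex.exp (c * z)) 0) ∘ (fun N : ℕ => 1 / (N : ℂ)) := by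
    filter_upwards [eventually_ge_atTop 1] with N hN
    have hNne : (N : ℂ) ≠ 0 := Nat.cast_ne_zero.mpr (by omega)
    simp only [Function.comp_apply, slope_def_field]
    rw [mul_one_div, sub_zero, mul_zero, Complex.exp_zero]
    field_simp
  exact ((Tendsto.congr' hev.symm hcomp).neg).congr (fun N => by ring)

lemma tendsto_fI {k : ℕ} (a : ℤ) (j : ℤ) :
    Tendsto (fun N : ℕ => fI k a N j) (atTop ⊓ 𝓟 {N : ℕ | Odd N}) (𝓝 (gI k j)) := by
  rcases eq_or_ne j 0 with rfl | hj
  · have : (fun N : ℕ => fI k a N 0) = fun _ => 0 := by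
      funext N; rw [fI, if_neg (by simp)]
    rw [this, gI, if_pos rfl]
    exact tendsto_const_nhds
  have hπ : ((Real.pi : ℝ) : ℂ) ≠ 0 := Complex.ofReal_ne_zero.mpr Real.pi_ne_zero
  set c : ℂ := 2 * (Real.pi : ℂ) * Complex.I * j with hc
  have hjC : (j : ℂ) ≠ 0 := Int.cast_ne_zero.mpr hj
  have hcne : c ≠ 0 := by
    rw [hc]
    exact mul_ne_zero (mul_ne_zero (mul_ne_zero two_ne_zero hπ) Complex.I_ne_zero) hjC
  -- B part
  have hB : Tendsto (fun N : ℕ => (((N : ℂ) * (1 - zrou N j)) ^ k)⁻¹) atTop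
      (𝓝 (((-c) ^ k)⁻¹)) := by
    have h0 : Tendsto (fun N : ℕ => (N : ℂ) * (1 - zrou N j)) atTop (𝓝 (-c)) := by
      have := tendsto_N_mul_one_sub_exp c
      apply this.congr
      intro N
      rw [zrou, hc]
    exact (h0.pow k).inv₀ (pow_ne_zero _ (neg_ne_zero.mpr hcne))
  -- A part
  have hA : Tendsto (fun N : ℕ => Complex.exp ((2 * (a : ℂ) - 1) * (Real.pi : ℂ) * Complex.I * j / N))
      atTop (𝓝 1) := by
    have h1 : Tendsto (fun N : ℕ => (2 * (a : ℂ) - 1) * (Real.pi : ℂ) * Complex.I * j * (1 / N))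
        atTop (𝓝 ((2 * (a : ℂ) - 1) * (Real.pi : ℂ) * Complex.I * j * 0)) :=
      tendsto_one_div_nat.const_mul _
    rw [mul_zero] at h1
    have h2 := (Complex.continuous_exp.tendsto 0).comp h1
    rw [Complex.exp_zero] at h2
    exact h2.congr (fun N => by rw [Function.comp_apply, mul_one_div])
  have hprod : Tendsto (fun N : ℕ =>
      ((-1 : ℂ) ^ j * Complex.exp ((2 * (a : ℂ) - 1) * (Real.pi : ℂ) * Complex.I * j / N)) *
        (((N : ℂ) * (1 - zrou N j)) ^ k)⁻¹)
      (atTop ⊓ 𝓟 {N : ℕ | Odd N}) (𝓝 (((-1 : ℂ) ^ j * 1) * ((-c) ^ k)⁻¹)) :=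
    ((tendsto_const_nhds.mul hA).mul hB).mono_left inf_le_left
  have hval : ((-1 : ℂ) ^ j * 1) * ((-c) ^ k)⁻¹ = gI k j := by
    rw [gI, if_neg hj, mul_one, div_eq_mul_inv, hc]
  rw [← hval]
  refine Tendsto.congr' ?_ hprod
  rw [Filter.eventuallyEq_iff_exists_mem]
  refine ⟨{N | Odd N} ∩ {N | 2 * j.natAbs + 1 ≤ N}, ?_, ?_⟩
  · rw [Filter.mem_inf_iff]
    exact ⟨{N | 2 * j.natAbs + 1 ≤ N}, mem_atTop _, {N | Odd N}, Filter.mem_principal_self _,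
      by ext N; simp [and_comm]⟩
  rintro N ⟨hodd, hNge⟩
  dsimp only
  obtain ⟨t, ht⟩ := hodd
  simp only [Set.mem_setOf_eq] at hNge
  have hNne : (N : ℂ) ≠ 0 := Nat.cast_ne_zero.mpr (by omega)
  have hdiv : ((N - 1) / 2 : ℕ) = t := by omega
  rw [fI, if_pos ⟨hj, by omega⟩, hdiv]
  -- zrou N j ^ (t + a) = (-1)^j * exp ((2a-1) π I j / N)
  congr 1
  rw [zrou, ← Complex.exp_int_mul]
  have harg : ((t : ℤ) + a : ℤ) * (2 * (Real.pi : ℂ) * Complex.I * j / N)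
      = (j : ℂ) * ((Real.pi : ℂ) * Complex.I) + (2 * (a : ℂ) - 1) * (Real.pi : ℂ) * Complex.I * j / N := by
    have hNC : (N : ℂ) = 2 * (t : ℂ) + 1 := by
      rw [ht]; push_cast; ring
    field_simp
    rw [hNC]
    push_cast
    ring
  rw [harg, Complex.exp_add, Complex.exp_int_mul, Complex.exp_pi_mul_I]

lemma summable_bound {k : ℕ} (hk : 2 ≤ k) :
    Summable (fun j : ℤ => 1 / (4 * |(j : ℝ)|) ^ k) := by
  have hnat : Summable (fun n : ℕ => 1 / (4 * (n : ℝ)) ^ k) := by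
    have h := (Real.summable_one_div_nat_pow (p := k)).mpr (by omega)
    have h2 := h.mul_left ((1 : ℝ) / 4 ^ k)
    apply h2.congr
    intro n
    rw [mul_pow, _root_.div_mul_div_comm, one_mul]
  apply Summable.of_nat_of_neg
  · apply hnat.congr
    intro n
    simp
  · apply hnat.congr
    intro n
    simp

lemma tsum_gI_odd {k : ℕ} (hk : Odd k) : ∑' j : ℤ, gI k j = 0 := by
  have hneg : ∀ j : ℤ, gI k (-j) = -gI k j := by
    intro j
    rcases eq_or_ne j 0 with rfl | hj
    · simp [gI]
    · rw [gI, gI, if_neg (neg_ne_zero.mpr hj), if_neg hj]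
      have h1 : (-1 : ℂ) ^ (-j) = (-1 : ℂ) ^ j := by
        rcases Int.even_or_odd j with he | ho
        · rw [he.neg_one_zpow, (he.neg).neg_one_zpow]
        · rw [ho.neg_one_zpow, (ho.neg).neg_one_zpow]
      have h2 : (-(2 * (Real.pi : ℂ) * Complex.I * (-j : ℤ))) ^ k
          = -((-(2 * (Real.pi : ℂ) * Complex.I * j)) ^ k) := by
        rw [show (-(2 * (Real.pi : ℂ) * Complex.I * ((-j : ℤ) : ℂ)))
            = -(-(2 * (Real.pi : ℂ) * Complex.I * (j : ℂ))) by push_cast; ring]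
        rw [hk.neg_pow]
      rw [h1, h2, div_neg]
  have h := (Equiv.neg ℤ).tsum_eq (gI k)
  have h2 : ∑' j : ℤ, gI k (-j) = ∑' j : ℤ, gI k j := h
  rw [tsum_congr hneg, tsum_neg] at h2
  have h3 : (∑' j : ℤ, gI k j) + ∑' j : ℤ, gI k j = 0 := by linear_combination -h2
  exact add_self_eq_zero.mp h3

lemma tsum_gI_even {m : ℕ} (hm : 1 ≤ m) :
    ∑' j : ℤ, gI (2 * m) j
      = (1 - (2 : ℂ) ^ (-(2 * m : ℕ) + 1 : ℤ)) * (bernoulli' (2 * m) : ℂ) / ((2 * m)! : ℂ) := by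
  set Z : ℝ := (-1 : ℝ) ^ (m + 1) * 2 ^ (2 * m - 1) * Real.pi ^ (2 * m) *
      (bernoulli (2 * m) : ℝ) / (2 * m)! with hZ
  have hzeta : HasSum (fun n : ℕ => 1 / (n : ℝ) ^ (2 * m)) Z := hasSum_zeta_nat (by omega)
  -- even part
  have heven : HasSum (fun n : ℕ => if Even n then 2 * (1 / (n : ℝ) ^ (2 * m)) else 0)
      (2 * ((2 : ℝ) ^ (2 * m))⁻¹ * Z) := by
    have h2 := hzeta.mul_left (2 * ((2 : ℝ) ^ (2 * m))⁻¹)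
    have hinj : Function.Injective (fun n : ℕ => 2 * n) := fun x y h => by
      dsimp only at h; omega
    have hzero : ∀ x, x ∉ Set.range (fun n : ℕ => 2 * n) →
        (if Even x then 2 * (1 / (x : ℝ) ^ (2 * m)) else 0) = 0 := by
      intro x hx
      rw [if_neg]
      intro hev
      obtain ⟨c, hc⟩ := hev
      exact hx ⟨c, by show 2 * c = x; omega⟩
    rw [← Function.Injective.hasSum_iff hinj hzero]
    apply h2.congr_fun
    intro n
    simp only [Function.comp_apply]
    rw [if_pos (even_two_mul n)]
    push_cast
    rw [mul_pow, one_div, one_div, mul_inv]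
    ring
  have halt : HasSum (fun n : ℕ => (-1 : ℝ) ^ n * (1 / (n : ℝ) ^ (2 * m)))
      (2 * ((2 : ℝ) ^ (2 * m))⁻¹ * Z - Z) := by
    have h3 := heven.sub hzeta
    apply h3.congr_fun
    intro n
    rcases Nat.even_or_odd n with he | ho
    · rw [if_pos he, he.neg_one_pow]
      ring
    · rw [if_neg (Nat.not_even_iff_odd.mpr ho), ho.neg_one_pow]
      ring
  have haltC : HasSum (fun n : ℕ => ((((-1 : ℝ) ^ n * (1 / (n : ℝ) ^ (2 * m))) : ℝ) : ℂ))
      (((2 * ((2 : ℝ) ^ (2 * m))⁻¹ * Z - Z : ℝ)) : ℂ) := halt.mapL Complex.ofRealCLM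
  set w : ℂ := ((-1 : ℂ) ^ m * (2 * (Real.pi : ℂ)) ^ (2 * m))⁻¹ with hw
  set P : ℂ := w * (((2 * ((2 : ℝ) ^ (2 * m))⁻¹ * Z - Z : ℝ)) : ℂ) with hP
  have hπ : ((Real.pi : ℝ) : ℂ) ≠ 0 := Complex.ofReal_ne_zero.mpr Real.pi_ne_zero
  have hI2m : (Complex.I) ^ (2 * m) = (-1 : ℂ) ^ m := by rw [pow_mul, Complex.I_sq]
  have h1 : HasSum (fun n : ℕ => gI (2 * m) (n : ℤ)) P := by
    have h4 := haltC.mul_left w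
    apply h4.congr_fun
    intro n
    rcases Nat.eq_zero_or_pos n with rfl | hn
    · rw [show ((0 : ℕ) : ℤ) = 0 from rfl]
      simp [gI, zero_pow (show 2 * m ≠ 0 by omega)]
    · have hn0 : ((n : ℤ)) ≠ 0 := by omega
      have hnC : ((n : ℝ) : ℂ) ≠ 0 := by
        rw [Complex.ofReal_ne_zero]
        positivity
      rw [gI, if_neg hn0]
      have hneg : (-(2 * (Real.pi : ℂ) * Complex.I * ((n : ℤ) : ℂ))) ^ (2 * m)
          = (2 * (Real.pi : ℂ) * Complex.I * ((n : ℤ) : ℂ)) ^ (2 * m) :=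
        (even_two_mul m).neg_pow _
      rw [hneg, zpow_natCast]
      push_cast
      rw [hw]
      rw [mul_pow (2 * (Real.pi : ℂ) * Complex.I), mul_pow (2 * (Real.pi : ℂ)), hI2m]
      have hm1 : ((-1 : ℂ) ^ m) ≠ 0 := by
        apply pow_ne_zero; norm_num
      field_simp
  have h1' : HasSum (fun n : ℕ => gI (2 * m) ((n : ℤ) + 1)) P := by
    have : HasSum (fun n : ℕ => gI (2 * m) ((n + 1 : ℕ) : ℤ)) P := by
      rw [hasSum_nat_add_iff (f := fun n : ℕ => gI (2 * m) (n : ℤ)) 1]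
      simpa [gI] using h1
    apply this.congr_fun
    intro n
    norm_cast
  have h2 : HasSum (fun n : ℕ => gI (2 * m) (-((n : ℤ) + 1))) P := by
    apply h1'.congr_fun
    intro n
    set j : ℤ := (n : ℤ) + 1 with hj
    have hjne : j ≠ 0 := by omega
    rw [gI, gI, if_neg hjne, if_neg (neg_ne_zero.mpr hjne)]
    have ha : (-1 : ℂ) ^ (-j) = (-1 : ℂ) ^ j := by
      rcases Int.even_or_odd j with he | ho
      · rw [he.neg_one_zpow, (he.neg).neg_one_zpow]
      · rw [ho.neg_one_zpow, (ho.neg).neg_one_zpow]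
    have hb : (-(2 * (Real.pi : ℂ) * Complex.I * ((-j : ℤ) : ℂ))) ^ (2 * m)
        = (-(2 * (Real.pi : ℂ) * Complex.I * (j : ℂ))) ^ (2 * m) := by
      rw [show (-(2 * (Real.pi : ℂ) * Complex.I * ((-j : ℤ) : ℂ)))
          = -(-(2 * (Real.pi : ℂ) * Complex.I * (j : ℂ))) by push_cast; ring]
      exact (even_two_mul m).neg_pow _
    rw [ha, hb]
    
  have hsum : HasSum (gI (2 * m)) (P + P) := h1.of_nat_of_neg_add_one h2
  rw [hsum.tsum_eq]
  -- final constant computation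
  rw [show (bernoulli' (2 * m) : ℂ) = (bernoulli (2 * m) : ℂ) by
    rw [bernoulli_eq_bernoulli'_of_ne_one (by omega)]]
  have hzpow : (2 : ℂ) ^ (-(2 * m : ℕ) + 1 : ℤ) = 2 * ((2 : ℂ) ^ (2 * m))⁻¹ := by
    rw [show (-(2 * m : ℕ) + 1 : ℤ) = 1 + -(2 * m : ℕ) by ring, zpow_add₀ (two_ne_zero),
      zpow_one, zpow_neg, zpow_natCast]
  rw [hzpow, hP, hZ, hw]
  have hfact : (((2 * m)! : ℝ) : ℂ) ≠ 0 := by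
    rw [Complex.ofReal_ne_zero]
    positivity
  have hpow21 : (2 : ℂ) ^ (2 * m - 1) = 2 ^ (2 * m) / 2 := by
    rw [eq_div_iff (two_ne_zero' ℂ), ← pow_succ]
    congr 1
    omega
  have hsq : ((-1 : ℂ) ^ m) * ((-1 : ℂ) ^ m) = 1 := by
    rw [← pow_add, ← two_mul, pow_mul]
    norm_num
  push_cast
  rw [show ((-1 : ℂ)) ^ (m + 1) = -((-1 : ℂ) ^ m) by rw [pow_succ]; ring]
  rw [mul_pow (2 : ℂ) ((Real.pi : ℂ)), hpow21]
  generalize hqe : ((-1 : ℂ)) ^ m = q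
  generalize hue : (2 : ℂ) ^ (2 * m) = u
  generalize hve : ((Real.pi : ℝ) : ℂ) ^ (2 * m) = v
  generalize hFe : ((((2 * m)! : ℕ)) : ℂ) = F
  generalize hBe : ((bernoulli (2 * m) : ℚ) : ℂ) = B
  have hsq' : q * q = 1 := by
    rw [← hqe, ← pow_add, ← two_mul, pow_mul]
    norm_num
  have hu : u ≠ 0 := by rw [← hue]; exact pow_ne_zero _ two_ne_zero
  have hv : v ≠ 0 := by rw [← hve]; exact pow_ne_zero _ hπ
  have hq : q ≠ 0 := by rw [← hqe]; exact pow_ne_zero _ (by norm_num)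
  have hF : F ≠ 0 := by rw [← hFe]; exact Nat.cast_ne_zero.mpr (Nat.factorial_ne_zero _)
  have hqi : q⁻¹ = q := inv_eq_of_mul_eq_one_right hsq'
  simp only [mul_inv, hqi, inv_pow]
  field_simp
  have hU : u * u⁻¹ = 1 := mul_inv_cancel₀ hu
  have hV : v * v⁻¹ = 1 := mul_inv_cancel₀ hv
  have hFc : F * F⁻¹ = 1 := mul_inv_cancel₀ hF
  linear_combination (2 * (u - 2) * B) * hsq'

lemma sum_nx {N : ℕ} {x : ℂ} (hx : x ≠ 1) (hxN : x ^ N = 1) :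
    (x - 1) * ∑ n ∈ Finset.range N, (n : ℂ) * x ^ n = N := by
  have hgeom : ∑ n ∈ Finset.range N, x ^ n = 0 := by
    rw [geom_sum_eq hx, hxN]
    simp
  have h2 : ∑ n ∈ Finset.range (N + 1), (n : ℂ) * x ^ n
      = (∑ n ∈ Finset.range N, (n : ℂ) * x ^ n) + N * x ^ N := Finset.sum_range_succ _ _
  have h1 : ∑ n ∈ Finset.range (N + 1), (n : ℂ) * x ^ n
      = x * (∑ n ∈ Finset.range N, (n : ℂ) * x ^ n) + x * ∑ n ∈ Finset.range N, x ^ n := by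
    rw [Finset.sum_range_succ' (fun n => (n : ℂ) * x ^ n) N]
    rw [Finset.mul_sum, Finset.mul_sum, ← Finset.sum_add_distrib]
    push_cast
    simp only [Nat.cast_zero, zero_mul, add_zero]
    apply Finset.sum_congr rfl
    intro i _
    ring
  rw [hxN] at h2
  rw [hgeom, mul_zero, add_zero] at h1
  linear_combination h2 - h1

lemma sum_k1 {N : ℕ} (hN : 1 < N) (m : ℤ) (hm1 : 1 ≤ m) (hmN : m ≤ N) :
    ∑ p ∈ Finset.Ico 1 N, rou N p ^ m / (1 - rou N p)
      = (m : ℂ) - ((N : ℂ) + 1) / 2 := by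
  have hN0 : N ≠ 0 := by omega
  have hNC : (N : ℂ) ≠ 0 := Nat.cast_ne_zero.mpr hN0
  -- each root ≠ 1 and ^N = 1
  have hprop : ∀ p ∈ Finset.Ico 1 N, zrou N p ≠ 1 ∧ (zrou N (p : ℤ)) ^ N = 1 := by
    intro p hp
    simp only [Finset.mem_Ico] at hp
    constructor
    · rw [Ne, zrou_eq_one_iff hN0]
      intro hdvd
      have hple := Int.le_of_dvd (by exact_mod_cast hp.1 : (0 : ℤ) < p) hdvd
      omega
    · rw [zrou_pow, zrou_eq_one_iff hN0]
      exact ⟨p, by ring⟩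
  -- rewrite each term
  have hterm : ∀ p ∈ Finset.Ico 1 N, rou N p ^ m / (1 - rou N p)
      = -(1 / (N : ℂ)) * ∑ n ∈ Finset.range N, (n : ℂ) * zrou N ((m + n) * p) := by
    intro p hp
    obtain ⟨hne, hpow⟩ := hprop p hp
    have hsum := sum_nx hne hpow
    have hx1 : (1 : ℂ) - zrou N p ≠ 0 := by
      intro h
      apply hne
      linear_combination -h
    have hdivform : (1 : ℂ) / (1 - zrou N p)
        = -(1 / (N : ℂ)) * ∑ n ∈ Finset.range N, (n : ℂ) * (zrou N p) ^ n := by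
      rw [div_eq_iff hx1]
      field_simp
      linear_combination -hsum
    rw [← zrou_natCast]
    rw [show zrou N (p:ℤ) ^ m / (1 - zrou N (p:ℤ))
        = zrou N (p:ℤ) ^ m * (1 / (1 - zrou N (p:ℤ))) by ring]
    rw [hdivform]
    simp only [Finset.mul_sum]
    apply Finset.sum_congr rfl
    intro n _
    have hz : zrou N (p:ℤ) ^ m * zrou N (p:ℤ) ^ (n : ℕ) = zrou N ((m + n) * p) := by
      rw [← zpow_natCast (zrou N (p:ℤ)) n, ← zpow_add₀ (zrou_ne_zero N p), zrou_zpow]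
    linear_combination (-(1 / (N : ℂ)) * (n : ℂ)) * hz
  rw [Finset.sum_congr rfl hterm]
  rw [← Finset.mul_sum, Finset.sum_comm]
  -- inner sum over p
  have hinner : ∀ n ∈ Finset.range N, ∑ p ∈ Finset.Ico 1 N, (n : ℂ) * zrou N ((m + n) * p)
      = (n : ℂ) * (if (N : ℤ) ∣ (m + n) then (N : ℂ) - 1 else -1) := by
    intro n _
    rw [← Finset.mul_sum]
    congr 1
    have hrange : ∑ p ∈ Finset.range N, zrou N ((m + n) * p)
        = if (N : ℤ) ∣ (m + n) then (N : ℂ) else 0 := by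
      have hform : ∀ p : ℕ, zrou N ((m + n) * p) = (zrou N (m + n)) ^ p := by
        intro p
        rw [zrou_pow]
        congr 1
        ring
      rw [Finset.sum_congr rfl (fun p _ => hform p)]
      split_ifs with hdvd
      · rw [(zrou_eq_one_iff hN0 _).mpr hdvd]
        simp
      · have hne1 : zrou N (m + n) ≠ 1 := by
          rw [Ne, zrou_eq_one_iff hN0]
          exact hdvd
        rw [geom_sum_eq hne1]
        rw [zrou_pow, (zrou_eq_one_iff hN0 _).mpr ⟨m + n, by ring⟩]
        simp
    have hsplit : ∑ p ∈ Finset.range N, zrou N ((m + n) * p)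
        = zrou N ((m + n) * 0) + ∑ p ∈ Finset.Ico 1 N, zrou N ((m + n) * p) := by
      rw [Finset.range_eq_Ico]
      have := Finset.sum_eq_sum_Ico_succ_bot (show 0 < N by omega)
        (fun p : ℕ => zrou N ((m + n) * p))
      simpa using this
    rw [hrange] at hsplit
    have h0 : zrou N ((m + n) * 0) = 1 := by
      rw [mul_zero, (zrou_eq_one_iff hN0 _).mpr ⟨0, by ring⟩]
    rw [h0] at hsplit
    split_ifs with hdvd
    · rw [if_pos hdvd] at hsplit
      linear_combination -hsplit
    · rw [if_neg hdvd] at hsplit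
      linear_combination -hsplit
  rw [Finset.sum_congr rfl hinner]
  -- evaluate the remaining explicit sum
  have hm0 : (0 : ℤ) ≤ m := by omega
  set n₀ : ℕ := N - m.toNat with hn₀
  have hn₀N : n₀ ∈ Finset.range N := by
    rw [Finset.mem_range]
    omega
  have hsplit2 : ∀ n ∈ Finset.range N,
      (n : ℂ) * (if (N : ℤ) ∣ (m + n) then (N : ℂ) - 1 else -1)
        = (if (N : ℤ) ∣ (m + n) then (n : ℂ) * N else 0) - n := by
    intro n _
    split_ifs
    · ring
    · ring
  rw [Finset.sum_congr rfl hsplit2, Finset.sum_sub_distrib]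
  have hsingle : ∑ n ∈ Finset.range N, (if (N : ℤ) ∣ (m + n) then (n : ℂ) * N else 0)
      = (n₀ : ℂ) * N := by
    refine (Finset.sum_eq_single_of_mem n₀ hn₀N ?_).trans ?_
    · intro b hb hbne
      rw [Finset.mem_range] at hb
      rw [if_neg]
      rintro ⟨c, hc⟩
      have hc1 : 1 ≤ c := by
        rcases lt_or_ge c 1 with h | h
        · exfalso
          have : m + (b : ℤ) ≤ 0 := by
            calc m + (b : ℤ) = N * c := hc
            _ ≤ N * 0 := by
                apply mul_le_mul_of_nonneg_left (by omega) (by positivity)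
            _ = 0 := by ring
          omega
        · exact h
      have hc2 : c < 2 := by
        rcases lt_or_ge c 2 with h | h
        · exact h
        · exfalso
          have : (2 : ℤ) * N ≤ m + b := by
            calc (2 : ℤ) * N = N * 2 := by ring
            _ ≤ N * c := by
                apply mul_le_mul_of_nonneg_left h (by positivity)
            _ = m + b := hc.symm
          omega
      have : c = 1 := by omega
      rw [this, mul_one] at hc
      omega
    · rw [if_pos ⟨1, by omega⟩]
  rw [hsingle]
  have hgauss : (∑ n ∈ Finset.range N, (n : ℂ)) * 2 = (N : ℂ) * ((N : ℂ) - 1) := by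
    have h := Finset.sum_range_id_mul_two N
    have h2 : ((∑ i ∈ Finset.range N, i : ℕ) : ℂ) * 2 = ((N * (N - 1) : ℕ) : ℂ) := by
      exact_mod_cast congrArg (Nat.cast : ℕ → ℂ) h
    push_cast [Nat.cast_sub (by omega : 1 ≤ N)] at h2
    exact h2
  have hn₀C : (n₀ : ℂ) = (N : ℂ) - (m : ℂ) := by
    have : (n₀ : ℤ) = (N : ℤ) - m := by omega
    exact_mod_cast congrArg (Int.cast : ℤ → ℂ) this
  rw [hn₀C]
  field_simp
  linear_combination hgauss


lemma tsum_gI {k : ℕ} (hk : 1 ≤ k) :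
    ∑' j : ℤ, gI k j
      = (1 - (2 : ℂ) ^ (-(k : ℤ) + 1)) * (bernoulli' k : ℂ) / (k ! : ℂ) := by
  rcases Nat.even_or_odd k with ⟨m, hm⟩ | hodd
  · have hm1 : 1 ≤ m := by omega
    rw [show k = 2 * m by omega]
    exact tsum_gI_even hm1
  · rw [tsum_gI_odd hodd]
    rcases eq_or_ne k 1 with rfl | hne
    · norm_num
    · rw [bernoulli'_eq_zero_of_odd hodd (by omega)]
      simp

end Stmt2Aux

open Stmt2Aux in
/-- For fixed `a : ℤ` and fixed `k ≥ 1`, the limit as `N → ∞` over odd `N` of `N^(-k)` times the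
sum over `N`-th roots of unity `ζ ≠ 1` of `ζ^((N-1)/2 + a) / (1-ζ)^k` equals
`(1 - 2^(-k+1)) ⬝ B_k / k!`, with the Bernoulli number convention `B₁ = 1/2`. -/
theorem stmt2 (a : ℤ) (k : ℕ) (hk : 1 ≤ k) :
    Tendsto
      (fun N : ℕ => (1 / (N : ℂ) ^ k) *
        ∑ p ∈ Finset.Ico 1 N,
          rou N p ^ ((((N - 1) / 2 : ℕ) : ℤ) + a) / (1 - rou N p) ^ k)
      (atTop ⊓ 𝓟 {N : ℕ | Odd N})
      (𝓝 ((1 - (2 : ℂ) ^ (-(k : ℤ) + 1)) * (bernoulli' k : ℂ) / (k ! : ℂ))) := by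
  rcases eq_or_ne k 1 with rfl | hk1
  · -- the case k = 1, via the exact evaluation of the sum
    have hval : ((1 : ℕ) : ℤ) = 1 := by norm_num
    rw [hval, show (1 - (2 : ℂ) ^ (-(1 : ℤ) + 1)) * (bernoulli' 1 : ℂ) / (1! : ℂ) = 0 by
      norm_num]
    have hev : (fun N : ℕ => (1 / (N : ℂ) ^ 1) *
        ∑ p ∈ Finset.Ico 1 N,
          rou N p ^ ((((N - 1) / 2 : ℕ) : ℤ) + a) / (1 - rou N p) ^ 1)
          =ᶠ[atTop ⊓ 𝓟 {N : ℕ | Odd N}] (fun N : ℕ => ((a : ℂ) - 1) / N) := by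
      rw [Filter.EventuallyEq, Filter.eventually_inf_principal]
      filter_upwards [Filter.eventually_ge_atTop (2 * a.natAbs + 2)] with N hge hodd
      obtain ⟨t, ht⟩ := hodd
      have hs := sum_k1 (show 1 < N by omega) ((((N - 1) / 2 : ℕ) : ℤ) + a)
        (by omega) (by omega)
      simp only [pow_one] at hs ⊢
      rw [hs]
      have hdiv : ((N - 1) / 2 : ℕ) = t := by omega
      rw [hdiv]
      have hNC : (N : ℂ) ≠ 0 := Nat.cast_ne_zero.mpr (by omega)
      have hNt : (N : ℂ) = 2 * (t : ℂ) + 1 := by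
        rw [ht]; push_cast; ring
      push_cast
      field_simp
      linear_combination (-1 : ℂ) * hNt
    refine Tendsto.congr' hev.symm ?_
    have h0 : Tendsto (fun N : ℕ => ((a : ℂ) - 1) * (1 / N)) atTop (𝓝 (((a : ℂ) - 1) * 0)) :=
      tendsto_one_div_nat.const_mul _
    rw [mul_zero] at h0
    exact (h0.congr (fun N => by rw [mul_one_div])).mono_left inf_le_left
  · -- the case k ≥ 2, via dominated convergence
    have hk2 : 2 ≤ k := by omega
    have hDCT := tendsto_tsum_of_dominated_convergence (summable_bound hk2)
      (tendsto_fI (k := k) a)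
      (Filter.Eventually.of_forall (fun N j => bound_fI hk a N j))
    rw [tsum_gI hk] at hDCT
    refine Tendsto.congr' ?_ hDCT
    rw [Filter.EventuallyEq, Filter.eventually_inf_principal]
    filter_upwards with N hodd
    exact (sum_eq a hodd).symm
end

section
/- For nonnegative integers a, b, c and a positive integer N, the residue at x = 0 of x^a (1+x)^(N-1+b) / ((1+x)^N - 1)^(c+1) equals (1/N) Σ_{p=0}^{a} (-1)^(a-p) C((b+p)/N, c) C(a, p), where C((b+p)/N, c) is the generalized binomial coefficient. -/
open Nat Finset PowerSeries

namespace Stmt10Aux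

/-- The formal binomial series `(1+X)^w` for rational `w`. -/
noncomputable def B (w : ℚ) : PowerSeries ℚ := PowerSeries.mk fun k => Ring.choose w k

lemma coeff_B (w : ℚ) (k : ℕ) : PowerSeries.coeff (R := ℚ) k (B w) = Ring.choose w k :=
  PowerSeries.coeff_mk _ _

lemma B_mul (w w' : ℚ) : B w * B w' = B (w + w') := by
  ext n
  rw [PowerSeries.coeff_mul, coeff_B, Ring.add_choose_eq n (Commute.all w w')]
  exact Finset.sum_congr rfl fun ij _ => by rw [coeff_B, coeff_B]

lemma B_zero : B 0 = 1 := by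
  ext k
  rw [coeff_B, show (0:ℚ) = ((0:ℕ):ℚ) by norm_num, Ring.choose_natCast,
    PowerSeries.coeff_one]
  cases k <;> simp

lemma B_one' : B 1 = 1 + PowerSeries.X := by
  ext k
  rw [coeff_B, show (1:ℚ) = ((1:ℕ):ℚ) by norm_num, Ring.choose_natCast, map_add,
    PowerSeries.coeff_one, PowerSeries.coeff_X]
  match k with
  | 0 => simp
  | 1 => simp
  | (k+2) => simp [Nat.choose_eq_zero_of_lt]

lemma B_pow (w : ℚ) (n : ℕ) : B w ^ n = B (n * w) := by
  induction n with
  | zero => simpa using B_zero.symm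
  | succ n ih =>
      rw [pow_succ, ih, B_mul]
      norm_num
      ring_nf

lemma dvd_sub_mul {d f g f' g' : PowerSeries ℚ} (h : d ∣ f - g) (h' : d ∣ f' - g') :
    d ∣ f * f' - g * g' := by
  have e : f * f' - g * g' = f * (f' - g') + (f - g) * g' := by ring
  rw [e]
  exact dvd_add (h'.mul_left f) (h.mul_right g')

lemma dvd_sub_pow {d f g : PowerSeries ℚ} (h : d ∣ f - g) (n : ℕ) : d ∣ f ^ n - g ^ n :=
  h.trans (sub_dvd_pow_sub_pow f g n)

lemma coeff_eq_of_dvd {f g : PowerSeries ℚ} {c : ℕ}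
    (h : (PowerSeries.X : PowerSeries ℚ) ^ (c+1) ∣ f - g) :
    PowerSeries.coeff (R := ℚ) c f = PowerSeries.coeff (R := ℚ) c g := by
  have h0 := (PowerSeries.X_pow_dvd_iff).1 h c (Nat.lt_succ_self c)
  rw [map_sub] at h0
  linarith

/-- Key residue computation: `coeff m ((v + X v') r^(m+1)) = 0` for `m ≥ 1`, `v r = 1`. -/
lemma residue_zero (v r : PowerSeries ℚ) (hvr : v * r = 1) (m : ℕ) (hm : m ≠ 0) :
    PowerSeries.coeff (R := ℚ) m ((v + PowerSeries.X * (d⁄dX ℚ v)) * r ^ (m + 1)) = 0 := by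
  obtain ⟨m₀, rfl⟩ := Nat.exists_eq_succ_of_ne_zero hm
  set D := d⁄dX ℚ with hD
  have hrv : r * v = 1 := by rw [mul_comm]; exact hvr
  have hpow : ∀ (f : PowerSeries ℚ) (n : ℕ),
      D (f ^ (n+1)) = ((n : PowerSeries ℚ) + 1) * (f ^ n * D f) := by
    intro f n
    rw [Derivation.leibniz_pow]
    simp only [Nat.add_sub_cancel, smul_eq_mul, nsmul_eq_mul]
    push_cast
    ring
  have hA : r ^ (m₀+1) * v ^ (m₀+1) = 1 := by rw [← mul_pow, hrv, one_pow]
  have hB : r ^ (m₀+1) * v ^ m₀ = r := by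
    have h0 : (r * v) ^ m₀ = 1 := by rw [hrv, one_pow]
    calc r ^ (m₀+1) * v ^ m₀ = r * ((r*v) ^ m₀) := by ring
    _ = r := by rw [h0, mul_one]
  have e1 : r ^ (m₀+1) * (((m₀ : PowerSeries ℚ)+1) * (v ^ m₀ * D v))
      + v ^ (m₀+1) * D (r ^ (m₀+1)) = 0 := by
    have h := D.leibniz (r ^ (m₀+1)) (v ^ (m₀+1))
    rw [hA, Derivation.map_one_eq_zero, hpow v m₀] at h
    simpa [smul_eq_mul, add_comm] using h.symm
  have e2 : ((m₀ : PowerSeries ℚ)+1) * (D v * r ^ (m₀+2)) = - D (r ^ (m₀+1)) := by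
    linear_combination r^(m₀+1) * e1 - ((m₀ : PowerSeries ℚ)+1) * D v * r^(m₀+1) * hB
      - D (r ^ (m₀+1)) * hA
  have hq : v * r ^ (m₀+2) = r ^ (m₀+1) := by
    calc v * r ^ (m₀+2) = (v * r) * r ^ (m₀+1) := by ring
    _ = r ^ (m₀+1) := by rw [hvr, one_mul]
  have hE : ((m₀ : PowerSeries ℚ)+1) * ((v + PowerSeries.X * D v) * r ^ (m₀+2))
      = ((m₀ : PowerSeries ℚ)+1) * r ^ (m₀+1) - PowerSeries.X * D (r ^ (m₀+1)) := by
    calc ((m₀ : PowerSeries ℚ)+1) * ((v + PowerSeries.X * D v) * r ^ (m₀+2))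
        = ((m₀ : PowerSeries ℚ)+1) * (v * r ^ (m₀+2))
          + PowerSeries.X * (((m₀ : PowerSeries ℚ)+1) * (D v * r ^ (m₀+2))) := by ring
    _ = ((m₀ : PowerSeries ℚ)+1) * r ^ (m₀+1) - PowerSeries.X * D (r ^ (m₀+1)) := by
        rw [hq, e2]; ring
  have hc := congrArg (PowerSeries.coeff (R := ℚ) (m₀+1)) hE
  have hnat : ((m₀ : PowerSeries ℚ) + 1) = (PowerSeries.C (R := ℚ)) ((m₀ : ℚ) + 1) := by
    rw [map_add, map_natCast, map_one]
  rw [hnat, PowerSeries.coeff_C_mul, map_sub, PowerSeries.coeff_C_mul,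
    PowerSeries.coeff_succ_X_mul, PowerSeries.coeff_derivative] at hc
  have hm1 : ((m₀ : ℚ) + 1) ≠ 0 := by positivity
  have h0 : ((m₀:ℚ)+1) * PowerSeries.coeff (R := ℚ) (m₀+1) ((v + PowerSeries.X * D v) * r^(m₀+2))
      = ((m₀:ℚ)+1) * 0 := by
    rw [mul_zero]; linarith
  have h1 := mul_left_cancel₀ hm1 h0
  simpa using h1

lemma ringChoose_eq (w : ℚ) (c : ℕ) :
    Ring.choose w c = (descPochhammer ℚ c).eval w / c ! := by
  have h := Ring.descPochhammer_eq_factorial_smul_choose (R := ℚ) w c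
  have h2 : (descPochhammer ℚ c).eval w = (descPochhammer ℤ c).smeval w := by
    rw [← descPochhammer_map (algebraMap ℤ ℚ) c, Polynomial.eval_map, ← Polynomial.aeval_def,
      Polynomial.aeval_eq_smeval]
  rw [← h2, nsmul_eq_mul] at h
  rw [h]
  field_simp

end Stmt10Aux

open Stmt10Aux in
/-- The residue at `x = 0` of `x^a (1+x)^(N-1+b) / ((1+x)^N - 1)^(c+1)` equals
`(1/N) Σ_{p=0}^{a} (-1)^(a-p) C((b+p)/N, c) C(a, p)`.  The residue is encoded as the
`x^c` coefficient of the power series `g` with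
`g ⬝ ((1+x)^N - 1)^(c+1) = x^(a+c+1) (1+x)^(N-1+b)` (such `g` is unique). -/
theorem stmt10 (a b c N : ℕ) (hN : 0 < N) (g : PowerSeries ℚ)
    (hg : g * ((1 + PowerSeries.X) ^ N - 1) ^ (c + 1)
        = PowerSeries.X ^ (a + c + 1) * (1 + PowerSeries.X) ^ (N - 1 + b)) :
    PowerSeries.coeff (R := ℚ) c g
      = (1 / (N : ℚ)) * ∑ p ∈ Finset.range (a + 1),
          (-1) ^ (a - p) * ((descPochhammer ℚ c).eval (((b : ℚ) + p) / N) / c !)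
            * a.choose p := by
  obtain ⟨M, rfl⟩ : ∃ M, N = M + 1 := ⟨N - 1, (Nat.succ_pred_eq_of_pos hN).symm⟩
  set N' : ℕ := M + 1 with hN'
  have hNQ : ((N' : ℚ)) ≠ 0 := by positivity
  set u : PowerSeries ℚ := (1 + PowerSeries.X) ^ N' - 1 with hu
  have hu0 : PowerSeries.constantCoeff (R := ℚ) u = 0 := by
    simp [hu, map_pow]
  obtain ⟨v, huv⟩ : (PowerSeries.X : PowerSeries ℚ) ∣ u := PowerSeries.X_dvd_iff.2 hu0
  have hcoeff1 : ∀ n : ℕ,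
      PowerSeries.coeff (R := ℚ) 1 ((1 + PowerSeries.X : PowerSeries ℚ) ^ n) = n := by
    intro n
    induction n with
    | zero => simp
    | succ n ih =>
        rw [pow_succ, mul_add, mul_one, map_add, ih,
          show (1:ℕ) = 0 + 1 from rfl, PowerSeries.coeff_succ_mul_X,
          PowerSeries.coeff_zero_eq_constantCoeff, map_pow]
        push_cast
        simp
  have hv0 : PowerSeries.constantCoeff (R := ℚ) v = (N' : ℚ) := by
    have h1 : PowerSeries.coeff (R := ℚ) 1 u = (N' : ℚ) := by
      rw [hu, map_sub, hcoeff1]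
      simp
    rw [huv, show (1:ℕ) = 0 + 1 from rfl, PowerSeries.coeff_succ_X_mul,
      PowerSeries.coeff_zero_eq_constantCoeff] at h1
    exact h1
  obtain ⟨V, hV⟩ : IsUnit v :=
    PowerSeries.isUnit_iff_constantCoeff.2 (by rw [hv0]; exact isUnit_iff_ne_zero.2 hNQ)
  set r : PowerSeries ℚ := ↑V⁻¹ with hr
  have hvr : v * r = 1 := by rw [← hV, hr, Units.mul_inv]
  set D := d⁄dX ℚ with hD
  have hDone : D (1 + PowerSeries.X) = 1 := by
    rw [hD]
    simp
  have hder : ((N' : PowerSeries ℚ)) * (1 + PowerSeries.X) ^ M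
      = v + PowerSeries.X * D v := by
    have h1 : D u = ((N' : PowerSeries ℚ)) * (1 + PowerSeries.X) ^ M := by
      rw [hu, map_sub, Derivation.map_one_eq_zero, sub_zero, Derivation.leibniz_pow, hDone]
      simp only [smul_eq_mul, nsmul_eq_mul, mul_one]
      norm_num [hN']
    have h2 : D u = v + PowerSeries.X * D v := by
      rw [huv, D.leibniz]
      simp only [smul_eq_mul, hD, PowerSeries.derivative_X, mul_one]
      ring
    rw [← h1, h2]
  -- the truncated binomial series
  set w₀ : ℚ := 1 / (N' : ℚ) with hw₀
  set P : Polynomial ℚ := PowerSeries.trunc (c+1) (B w₀) with hP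
  have hPB : (PowerSeries.X : PowerSeries ℚ) ^ (c+1) ∣ (P : PowerSeries ℚ) - B w₀ := by
    rw [PowerSeries.X_pow_dvd_iff]
    intro d hd
    rw [map_sub, Polynomial.coeff_coe, hP, PowerSeries.coeff_trunc, if_pos hd, sub_self]
  set S : PowerSeries ℚ := Polynomial.aeval u P with hS
  have hS0 : PowerSeries.constantCoeff (R := ℚ) S = 1 := by
    rw [hS, Polynomial.aeval_def, Polynomial.hom_eval₂, hu0, Polynomial.eval₂_at_zero,
      RingHom.comp_apply]
    rw [show (algebraMap ℚ (PowerSeries ℚ)) = PowerSeries.C (R := ℚ) from rfl,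
      PowerSeries.constantCoeff_C, hP, PowerSeries.coeff_trunc, if_pos (Nat.succ_pos c),
      coeff_B, Ring.choose_zero_right]
  have hSpow : (PowerSeries.X : PowerSeries ℚ)^(c+1)
      ∣ ((P : PowerSeries ℚ))^N' - (1 + PowerSeries.X) := by
    have h1 := dvd_sub_pow hPB N'
    have h2 : (B w₀)^N' = 1 + PowerSeries.X := by
      rw [B_pow, hw₀, show (N':ℚ) * (1/(N':ℚ)) = 1 by field_simp]
      exact B_one'
    rwa [h2] at h1
  have hpoly : (Polynomial.X : Polynomial ℚ)^(c+1) ∣ P^N' - (1 + Polynomial.X) := by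
    rw [Polynomial.X_pow_dvd_iff]
    intro d hd
    have h1 := (PowerSeries.X_pow_dvd_iff).1 hSpow d hd
    have e : ((P^N' - (1 + Polynomial.X) : Polynomial ℚ) : PowerSeries ℚ)
        = ((P : PowerSeries ℚ))^N' - (1 + PowerSeries.X) := by
      push_cast
      ring
    rw [← Polynomial.coeff_coe, e]
    exact h1
  have hmap := map_dvd (Polynomial.aeval u) hpoly
  simp only [map_sub, map_add, map_pow, map_one, Polynomial.aeval_X] at hmap
  rw [← hS] at hmap
  have h1u : (1 : PowerSeries ℚ) + u = (1 + PowerSeries.X)^N' := by rw [hu]; ring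
  have hXu : (PowerSeries.X : PowerSeries ℚ)^(c+1) ∣ u^(c+1) :=
    pow_dvd_pow_of_dvd ⟨v, huv⟩ (c+1)
  have hSN : (PowerSeries.X : PowerSeries ℚ)^(c+1) ∣ S^N' - (1 + PowerSeries.X)^N' := by
    rw [← h1u]
    exact hXu.trans hmap
  set E : PowerSeries ℚ := ∑ i ∈ Finset.range N', S^i * (1 + PowerSeries.X)^(N'-1-i) with hE
  have hgeom : E * (S - (1 + PowerSeries.X)) = S^N' - (1 + PowerSeries.X)^N' :=
    geom_sum₂_mul S (1 + PowerSeries.X) N'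
  have hE0 : PowerSeries.constantCoeff (R := ℚ) E = (N' : ℚ) := by
    rw [hE, map_sum]
    have h1 : ∀ i ∈ Finset.range N',
        PowerSeries.constantCoeff (R := ℚ) (S^i * (1 + PowerSeries.X)^(N'-1-i)) = 1 := by
      intro i _
      rw [map_mul, map_pow, map_pow, hS0, map_add, map_one, PowerSeries.constantCoeff_X,
        add_zero, one_pow, one_pow, mul_one]
    rw [Finset.sum_congr rfl h1, Finset.sum_const, Finset.card_range]
    simp
  have hXE : ¬ (PowerSeries.X : PowerSeries ℚ) ∣ E := by
    rw [PowerSeries.X_dvd_iff, hE0]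
    exact hNQ
  have hDS : (PowerSeries.X : PowerSeries ℚ)^(c+1) ∣ S - (1 + PowerSeries.X) := by
    apply (PowerSeries.X_prime).pow_dvd_of_dvd_mul_left (c+1) hXE
    rw [hgeom]
    exact hSN
  -- the polynomial Q and the key coefficient identity
  set Q : Polynomial ℚ := (P - 1)^a * P^b with hQ
  have hQs : (Polynomial.aeval u) Q = (S - 1)^a * S^b := by
    rw [hQ, map_mul, map_pow, map_pow, map_sub, map_one, hS]
  have hcong : (PowerSeries.X : PowerSeries ℚ)^(c+1) ∣
      (Polynomial.aeval u) Q - PowerSeries.X^a * (1 + PowerSeries.X)^b := by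
    rw [hQs]
    apply dvd_sub_mul
    · apply dvd_sub_pow
      rw [show S - 1 - PowerSeries.X = S - (1 + PowerSeries.X) by ring]
      exact hDS
    · apply dvd_sub_pow
      rw [show S - (1 + PowerSeries.X) = S - (1 + PowerSeries.X) by ring]
      exact hDS
  -- solve for g
  have hg2 : g * v^(c+1) = PowerSeries.X^a * (1 + PowerSeries.X)^(M+b) := by
    have h1 : PowerSeries.X^(c+1) * (g * v^(c+1))
        = PowerSeries.X^(c+1) * (PowerSeries.X^a * (1 + PowerSeries.X)^(M+b)) := by
      calc PowerSeries.X^(c+1) * (g * v^(c+1)) = g * (PowerSeries.X*v)^(c+1) := by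
            rw [mul_pow]; ring
      _ = g * u^(c+1) := by rw [← huv]
      _ = PowerSeries.X^(a+c+1) * (1 + PowerSeries.X)^(N'-1+b) := hg
      _ = PowerSeries.X^(c+1) * (PowerSeries.X^a * (1 + PowerSeries.X)^(M+b)) := by
            rw [show a+c+1 = (c+1)+a by omega, pow_add,
              show N'-1+b = M+b by omega]
            ring
    exact mul_left_cancel₀ (pow_ne_zero _ PowerSeries.X_ne_zero) h1
  have hgexp : g = (PowerSeries.X^a * (1 + PowerSeries.X)^b)
      * ((1 + PowerSeries.X)^M * r^(c+1)) := by
    calc g = g * (v*r)^(c+1) := by rw [hvr, one_pow, mul_one]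
    _ = (g * v^(c+1)) * r^(c+1) := by rw [mul_pow]; ring
    _ = (PowerSeries.X^a * (1 + PowerSeries.X)^(M+b)) * r^(c+1) := by rw [hg2]
    _ = (PowerSeries.X^a * (1 + PowerSeries.X)^b)
        * ((1 + PowerSeries.X)^M * r^(c+1)) := by rw [pow_add]; ring
  have hgc : PowerSeries.coeff (R := ℚ) c g
      = PowerSeries.coeff (R := ℚ) c
        ((Polynomial.aeval u Q) * ((1 + PowerSeries.X)^M * r^(c+1))) := by
    rw [hgexp]
    refine (coeff_eq_of_dvd ?_).symm
    rw [← sub_mul]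
    exact hcong.mul_right _
  -- the residue computation for each power of u
  have hterm : ∀ k : ℕ, PowerSeries.coeff (R := ℚ) c (u^k * ((1 + PowerSeries.X)^M * r^(c+1)))
      = if k = c then 1/(N':ℚ) else 0 := by
    intro k
    rw [huv, mul_pow, mul_assoc]
    rw [PowerSeries.coeff_X_pow_mul']
    by_cases hkc : k ≤ c
    · rw [if_pos hkc]
      have hCN : ((N' : PowerSeries ℚ)) = PowerSeries.C (R := ℚ) (N' : ℚ) :=
        (map_natCast (PowerSeries.C (R := ℚ)) N').symm
      have hMder : ((1 + PowerSeries.X) : PowerSeries ℚ)^M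
          = PowerSeries.C (R := ℚ) (1/(N':ℚ)) * (v + PowerSeries.X * D v) := by
        rw [← hder, hCN, ← mul_assoc, ← map_mul,
          show (1/(N':ℚ)) * (N':ℚ) = 1 by field_simp, map_one, one_mul]
      rw [hMder]
      have hvrk : (v*r)^k = 1 := by rw [hvr, one_pow]
      have hvk : v^k * r^(c+1) = r^(c-k+1) := by
        calc v^k * r^(c+1) = v^k * (r^k * r^(c-k+1)) := by
              rw [show c+1 = k + (c-k+1) by omega, pow_add]
        _ = (v*r)^k * r^(c-k+1) := by rw [mul_pow]; ring
        _ = r^(c-k+1) := by rw [hvrk, one_mul]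
      have eexp : v^k * (PowerSeries.C (R := ℚ) (1/(N':ℚ)) * (v + PowerSeries.X * D v) * r^(c+1))
          = PowerSeries.C (R := ℚ) (1/(N':ℚ)) * ((v + PowerSeries.X * D v) * r^(c-k+1)) := by
        rw [← hvk]; ring
      rw [eexp, PowerSeries.coeff_C_mul]
      by_cases hk : k = c
      · subst hk
        rw [if_pos rfl, Nat.sub_self, pow_one, PowerSeries.coeff_zero_eq_constantCoeff,
          map_mul, map_add, map_mul, PowerSeries.constantCoeff_X, zero_mul, add_zero]
        have h2 : PowerSeries.constantCoeff (R := ℚ) v * PowerSeries.constantCoeff (R := ℚ) r = 1 := by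
          rw [← map_mul, hvr, map_one]
        rw [h2, mul_one]
      · rw [if_neg hk]
        have hm : c - k ≠ 0 := by omega
        rw [residue_zero v r hvr (c-k) hm, mul_zero]
    · rw [if_neg hkc, if_neg (by omega : ¬ k = c)]
  -- assemble the sum
  have haev : (Polynomial.aeval u) Q
      = ∑ i ∈ Finset.range (Q.natDegree + 1), Q.coeff i • u^i :=
    Polynomial.aeval_eq_sum_range u
  have hsum : PowerSeries.coeff (R := ℚ) c g = Q.coeff c * (1/(N':ℚ)) := by
    rw [hgc, haev, Finset.sum_mul, map_sum]
    have h1 : ∀ i ∈ Finset.range (Q.natDegree+1),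
        PowerSeries.coeff (R := ℚ) c (Q.coeff i • u^i * ((1 + PowerSeries.X)^M * r^(c+1)))
        = if i = c then Q.coeff c * (1/(N':ℚ)) else 0 := by
      intro i _
      rw [smul_mul_assoc, LinearMap.map_smul, smul_eq_mul, hterm i]
      by_cases h : i = c
      · subst h; simp
      · simp [h]
    rw [Finset.sum_congr rfl h1, Finset.sum_ite_eq' (Finset.range (Q.natDegree+1)) c
      (fun _ => Q.coeff c * (1/(N':ℚ)))]
    by_cases hc : c ∈ Finset.range (Q.natDegree+1)
    · rw [if_pos hc]
    · rw [if_neg hc]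
      have h2 : Q.natDegree < c := by
        have := Finset.mem_range.not.1 hc
        omega
      rw [Polynomial.coeff_eq_zero_of_natDegree_lt h2, zero_mul]
  -- compute the coefficient of Q
  have hQc : Q.coeff c = PowerSeries.coeff (R := ℚ) c ((B w₀ - 1)^a * (B w₀)^b) := by
    rw [← Polynomial.coeff_coe]
    apply coeff_eq_of_dvd
    have hcoe : ((Q : Polynomial ℚ) : PowerSeries ℚ)
        = ((P : PowerSeries ℚ) - 1)^a * (P : PowerSeries ℚ)^b := by
      rw [hQ]; push_cast; ring
    rw [hcoe]
    apply dvd_sub_mul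
    · apply dvd_sub_pow
      rw [show (P : PowerSeries ℚ) - 1 - (B w₀ - 1) = (P : PowerSeries ℚ) - B w₀ by ring]
      exact hPB
    · exact dvd_sub_pow hPB b
  -- expand the binomial power
  have hBexp : ((B w₀ - 1)^a * (B w₀)^b : PowerSeries ℚ)
      = ∑ p ∈ Finset.range (a+1),
          (PowerSeries.C (R := ℚ) ((-1)^(p+a) * (a.choose p))) * B (((b:ℚ)+p) * w₀) := by
    rw [sub_pow, Finset.sum_mul]
    apply Finset.sum_congr rfl
    intro p _
    rw [one_pow, B_pow, B_pow]
    have hBB : B ((p:ℚ) * w₀) * B ((b:ℚ) * w₀) = B (((b:ℚ)+p) * w₀) := by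
      rw [B_mul]; congr 1; ring
    calc (-1:PowerSeries ℚ)^(p+a) * B ((p:ℚ)*w₀) * 1 * (a.choose p : PowerSeries ℚ)
          * B ((b:ℚ)*w₀)
        = ((-1:PowerSeries ℚ)^(p+a) * (a.choose p : PowerSeries ℚ))
          * (B ((p:ℚ)*w₀) * B ((b:ℚ)*w₀)) := by ring
    _ = (PowerSeries.C (R := ℚ) ((-1)^(p+a) * (a.choose p))) * B (((b:ℚ)+p) * w₀) := by
        rw [hBB, map_mul, map_pow, map_neg, map_one, map_natCast]
  -- finish
  rw [hsum, hQc, hBexp, map_sum, Finset.sum_mul, Finset.mul_sum]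
  apply Finset.sum_congr rfl
  intro p hp
  have hple : p ≤ a := by
    have := Finset.mem_range.1 hp
    omega
  rw [PowerSeries.coeff_C_mul, coeff_B, ringChoose_eq]
  have harg : ((b:ℚ)+p) * w₀ = ((b:ℚ)+p) / (N':ℚ) := by
    rw [hw₀]; field_simp
  have hsign : ((-1:ℚ))^(p+a) = (-1:ℚ)^(a-p) := by
    rw [show p + a = (a-p) + 2*p by omega, pow_add, pow_mul]
    simp
  rw [harg, hsign, hw₀]
  ring
end
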